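/- Optimality of the greedy transport plan via variational inequality: let c > 0, d_1 ≤ … ≤ d_n be nonnegative reals, l such that d_i ≤ 2 for i ≤ l and d_i > 2 for i > l, b_i > 0, and define F(α, β) = c + Σ b_i − 2α + Σ β_i d_i on X = { (α, β) ∈ [0,c] × Π_i [0, b_i] : α = Σ β_i }. Set α* = min{c, Σ_{i=1}^l b_i}, I* = max{ I ≤ l : Σ_{i=1}^I b_i ≤ c }, and β*_i = b_i for i ≤ I*, β*_{I*+1} = α* − Σ_{i=1}^{I*} b_i, β*_i = 0 otherwise. Then (α*, β*) is a global minimum of F on X. -/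

import Mathlib

/-- The greedy transport plan `(α*, β*)` is feasible and globally minimizes
`F(α,β) = c + Σ b_i − 2α + Σ β_i d_i` on
`X = {(α,β) ∈ [0,c] × Π [0,b_i] : α = Σ β_i}` (0-based indexing). -/
theorem greedy_plan_global_min {n : ℕ} (c : ℝ) (hc : 0 < c)
    (dd bb : ℕ → ℝ)
    (hd0 : ∀ i : Fin n, 0 ≤ dd i)
    (hmono : ∀ i j : Fin n, (i : ℕ) ≤ j → dd i ≤ dd j)
    (hb : ∀ i : Fin n, 0 < bb i)
    (l : ℕ) (hln : l ≤ n)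
    (hl₁ : ∀ i : Fin n, (i : ℕ) < l → dd i ≤ 2)
    (hl₂ : ∀ i : Fin n, l ≤ (i : ℕ) → 2 < dd i)
    (Istar : ℕ) (hIl : Istar ≤ l)
    (hIle : ∑ i ∈ Finset.range Istar, bb i ≤ c)
    (hImax : ∀ I, I ≤ l → ∑ i ∈ Finset.range I, bb i ≤ c → I ≤ Istar)
    (αstar : ℝ) (hαs : αstar = min c (∑ i ∈ Finset.range l, bb i))
    (βstar : Fin n → ℝ)
    (hβs : ∀ i : Fin n, βstar i =
      if (i : ℕ) < Istar then bb i
      else if (i : ℕ) = Istar then αstar - ∑ j ∈ Finset.range Istar, bb j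
      else 0) :
    (0 ≤ αstar ∧ αstar ≤ c ∧ (∀ i : Fin n, 0 ≤ βstar i ∧ βstar i ≤ bb i) ∧
      αstar = ∑ i, βstar i) ∧
    ∀ (α : ℝ) (β : Fin n → ℝ), 0 ≤ α → α ≤ c →
      (∀ i : Fin n, 0 ≤ β i ∧ β i ≤ bb i) → α = ∑ i, β i →
      c + ∑ i ∈ Finset.range n, bb i - 2 * αstar + ∑ i : Fin n, βstar i * dd i ≤
        c + ∑ i ∈ Finset.range n, bb i - 2 * α + ∑ i : Fin n, β i * dd i := by
  set S : ℝ := ∑ i ∈ Finset.range Istar, bb i with hS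
  have hIn : Istar ≤ n := hIl.trans hln
  have hbnn : ∀ i, i < n → 0 ≤ bb i := fun i hi => (hb ⟨i, hi⟩).le
  have hSl_nn : 0 ≤ ∑ i ∈ Finset.range l, bb i :=
    Finset.sum_nonneg fun i hi => hbnn i (lt_of_lt_of_le (Finset.mem_range.mp hi) hln)
  have hSSl : S ≤ ∑ i ∈ Finset.range l, bb i :=
    Finset.sum_le_sum_of_subset_of_nonneg (Finset.range_subset_range.mpr hIl)
      (fun i hi _ => hbnn i (lt_of_lt_of_le (Finset.mem_range.mp hi) hln))
  have hαS : S ≤ αstar := by rw [hαs]; exact le_min hIle hSSl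
  have hα0 : 0 ≤ αstar := by rw [hαs]; exact le_min hc.le hSl_nn
  have hαc : αstar ≤ c := by rw [hαs]; exact min_le_left _ _
  -- upper bound at index Istar
  have hkey_up : Istar < n → αstar ≤ S + bb Istar := by
    intro hn
    rcases lt_or_eq_of_le hIl with h | h
    · have hnot : ¬ (∑ i ∈ Finset.range (Istar + 1), bb i ≤ c) := by
        intro hh
        have := hImax (Istar + 1) h hh
        omega
      rw [Finset.sum_range_succ] at hnot
      push_neg at hnot
      exact le_trans hαc (le_of_lt hnot)
    · have h1 : αstar ≤ ∑ i ∈ Finset.range l, bb i := by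
        rw [hαs]; exact min_le_right _ _
      have h2 : (∑ i ∈ Finset.range l, bb i) = S := by rw [hS, h]
      have := hbnn Istar hn
      linarith [h1, h2 ▸ h1]
  -- sum of βstar equals αstar
  have hβsum : αstar = ∑ i, βstar i := by
    have hfe : ∑ i : Fin n, βstar i =
        ∑ i ∈ Finset.range n, (if i < Istar then bb i
          else if i = Istar then αstar - S else 0) := by
      rw [← Fin.sum_univ_eq_sum_range]
      exact Finset.sum_congr rfl fun i _ => hβs i
    rw [hfe]
    rcases lt_or_eq_of_le hIn with hn | hn
    · rw [Finset.range_eq_Ico, ← Finset.sum_Ico_consecutive _ (Nat.zero_le Istar) hIn,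
        ← Finset.range_eq_Ico]
      have h1 : (∑ i ∈ Finset.range Istar,
          (if i < Istar then bb i else if i = Istar then αstar - S else 0)) = S := by
        refine Finset.sum_congr rfl fun i hi => ?_
        rw [if_pos (Finset.mem_range.mp hi)]
      have h2 : (∑ i ∈ Finset.Ico Istar n,
          (if i < Istar then bb i else if i = Istar then αstar - S else 0)) = αstar - S := by
        rw [Finset.sum_eq_single_of_mem Istar (Finset.mem_Ico.mpr ⟨le_rfl, hn⟩)]
        · simp
        · intro b hb' hne
          have hb'' := Finset.mem_Ico.mp hb'
          rw [if_neg (by omega), if_neg hne]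
      rw [h1, h2]; ring
    · -- Istar = n, hence l = n and αstar = S
      have hl : l = n := le_antisymm hln (hn ▸ hIl)
      have hse : (∑ i ∈ Finset.range l, bb i) = S := by rw [hS, hl, hn]
      have hα : αstar = S := by
        rw [hαs, hse]
        exact min_eq_right (hse ▸ hIle)
      have : (∑ i ∈ Finset.range n,
          (if i < Istar then bb i else if i = Istar then αstar - S else 0)) = S := by
        rw [hS, ← hn]
        refine Finset.sum_congr rfl fun i hi => ?_
        rw [if_pos (Finset.mem_range.mp hi)]
      rw [this, hα]
  -- feasibility of βstar
  have hβfeas : ∀ i : Fin n, 0 ≤ βstar i ∧ βstar i ≤ bb i := by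
    intro i
    rcases lt_trichotomy (i : ℕ) Istar with h | h | h
    · rw [hβs i, if_pos h]
      exact ⟨(hb i).le, le_rfl⟩
    · rw [hβs i, if_neg (by omega), if_pos h]
      have hn : Istar < n := h ▸ i.isLt
      have hup := hkey_up hn
      have : bb Istar = bb (i : ℕ) := by rw [h]
      constructor
      · linarith
      · rw [← this]; linarith
    · rw [hβs i, if_neg (by omega), if_neg (by omega)]
      exact ⟨le_rfl, (hb i).le⟩
  refine ⟨⟨hα0, hαc, hβfeas, hβsum⟩, ?_⟩
  intro α β hα0' hαc' hβ hαsum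
  -- threshold
  set θ : ℝ := if Istar < n then min (dd Istar - 2) 0 else 0 with hθdef
  have hθ0 : θ ≤ 0 := by
    rw [hθdef]; split
    · exact min_le_right _ _
    · exact le_rfl
  have hθup : ∀ i : Fin n, (i : ℕ) < Istar → dd i - 2 ≤ θ := by
    intro i hi
    have hn : Istar < n ∨ Istar = n := lt_or_eq_of_le hIn
    have hd2 : dd i ≤ 2 := hl₁ i (lt_of_lt_of_le hi hIl)
    rcases hn with hn | hn
    · have hm : dd i ≤ dd Istar := hmono i ⟨Istar, hn⟩ hi.le
      rw [hθdef, if_pos hn]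
      exact le_min (by linarith) (by linarith)
    · rw [hθdef, if_neg (by omega)]
      linarith
  have hθlow : ∀ i : Fin n, Istar < (i : ℕ) → θ ≤ dd i - 2 := by
    intro i hi
    have hn : Istar < n := lt_trans hi i.isLt
    have hm : dd Istar ≤ dd i := hmono ⟨Istar, hn⟩ i hi.le
    rw [hθdef, if_pos hn]
    exact le_trans (min_le_left _ _) (by linarith)
  -- θ * (αstar - α) ≤ 0
  have hθα : θ * αstar - θ * α ≤ 0 := by
    by_cases hcl : (∑ i ∈ Finset.range l, bb i) ≤ c
    · have hIl' : Istar = l := le_antisymm hIl (hImax l le_rfl hcl)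
      have hθz : θ = 0 := by
        rw [hθdef]
        split
        · next hn =>
          have : 2 < dd Istar := hl₂ ⟨Istar, hn⟩ (hIl' ▸ le_rfl)
          exact min_eq_right (by linarith)
        · rfl
      rw [hθz]; simp
    · have hαeq : αstar = c := by
        rw [hαs]; exact min_eq_left (le_of_lt (not_le.mp hcl))
      have h1 : 0 ≤ αstar - α := by rw [hαeq]; linarith
      nlinarith
  -- per-index inequality
  have hkey : ∀ i : Fin n, (βstar i - β i) * (dd i - 2 - θ) ≤ 0 := by
    intro i
    rcases lt_trichotomy (i : ℕ) Istar with h | h | h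
    · rw [hβs i, if_pos h]
      have h1 : 0 ≤ bb i - β i := by linarith [(hβ i).2]
      have h2 : dd i - 2 - θ ≤ 0 := by linarith [hθup i h]
      exact mul_nonpos_iff.mpr (Or.inl ⟨h1, h2⟩)
    · rw [hβs i, if_neg (by omega), if_pos h]
      have hn : Istar < n := h ▸ i.isLt
      by_cases hdI : dd Istar ≤ 2
      · have hθe : θ = dd Istar - 2 := by
          rw [hθdef, if_pos hn]
          exact min_eq_left (by linarith)
        have hdi : dd (i : ℕ) = dd Istar := by rw [h]
        rw [hθe, hdi]
        ring_nf
        simp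
      · have hlI : l ≤ Istar := by
          by_contra hcon
          push_neg at hcon
          have := hl₁ i (h ▸ hcon)
          rw [h] at this
          exact hdI this
        have hαle : αstar - S ≤ 0 := by
          have h1 : αstar ≤ ∑ j ∈ Finset.range l, bb j := by
            rw [hαs]; exact min_le_right _ _
          have h2 : (∑ j ∈ Finset.range l, bb j) = S := by
            rw [hS, le_antisymm hIl hlI]
          linarith
        have h1 : αstar - S - β i ≤ 0 := by linarith [(hβ i).1]
        have h2 : 0 ≤ dd i - 2 - θ := by
          have : dd (i : ℕ) = dd Istar := by rw [h]
          push_neg at hdI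
          linarith
        exact mul_nonpos_iff.mpr (Or.inr ⟨h1, h2⟩)
    · rw [hβs i, if_neg (by omega), if_neg (by omega)]
      have h1 : 0 - β i ≤ 0 := by linarith [(hβ i).1]
      have h2 : 0 ≤ dd i - 2 - θ := by linarith [hθlow i h]
      exact mul_nonpos_iff.mpr (Or.inr ⟨h1, h2⟩)
  have hsum_le : ∑ i : Fin n, (βstar i - β i) * (dd i - 2 - θ) ≤ 0 :=
    Finset.sum_nonpos fun i _ => hkey i
  have expand : ∑ i : Fin n, (βstar i - β i) * (dd i - 2 - θ)
      = (∑ i : Fin n, βstar i * dd i) - (∑ i : Fin n, β i * dd i)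
        - (2 + θ) * (∑ i : Fin n, βstar i) + (2 + θ) * (∑ i : Fin n, β i) := by
    rw [Finset.mul_sum, Finset.mul_sum, ← Finset.sum_sub_distrib, ← Finset.sum_sub_distrib,
      ← Finset.sum_add_distrib]
    exact Finset.sum_congr rfl fun i _ => by ring
  rw [← hβsum, ← hαsum] at expand
  have : (∑ i : Fin n, βstar i * dd i) - (∑ i : Fin n, β i * dd i)
      - 2 * αstar + 2 * α ≤ 0 := by nlinarith [hsum_le, expand, hθα]
  linarith
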